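/- First integral of the flow on the positive-energy infinity manifold (the relation dχ/ds̃ = λ): along every solution of the infinity-manifold system, the quantity ṽ(σ)·cos(λ·s̃(σ)) − ũ(σ)·sin(λ·s̃(σ)) is constant in σ. -/

import Mathlib

open Real

/-- First integral of the flow on the positive-energy infinity
manifold: along every solution, `ṽ·cos(λs̃) − ũ·sin(λs̃)` is constant. -/
theorem infinity_manifold_first_integral
    (lam : ℝ) (hlam : 0 < lam)
    (I : Set ℝ) (hI : I.OrdConnected)
    (v s u : ℝ → ℝ)
    (hrange : ∀ σ ∈ I, s σ ∈ Set.Icc (-1 : ℝ) 1)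
    (hv : ∀ σ ∈ I, HasDerivAt v ((1 - s σ ^ 2) * u σ ^ 2) σ)
    (hs : ∀ σ ∈ I, HasDerivAt s ((1 / lam) * (1 - s σ ^ 2) * u σ) σ)
    (hu : ∀ σ ∈ I, HasDerivAt u (-((1 - s σ ^ 2) * u σ * v σ)) σ) :
    ∀ σ₁ ∈ I, ∀ σ₂ ∈ I,
      v σ₁ * Real.cos (lam * s σ₁) - u σ₁ * Real.sin (lam * s σ₁)
        = v σ₂ * Real.cos (lam * s σ₂) - u σ₂ * Real.sin (lam * s σ₂) := by
  set F : ℝ → ℝ := fun σ => v σ * Real.cos (lam * s σ) - u σ * Real.sin (lam * s σ) with hF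
  have hderiv : ∀ σ ∈ I, HasDerivAt F 0 σ := by
    intro σ hσ
    have h1 :=
      ((hv σ hσ).mul (((hs σ hσ).const_mul lam).cos)).sub
        ((hu σ hσ).mul (((hs σ hσ).const_mul lam).sin))
    refine h1.congr_deriv ?_
    have hlam' : lam ≠ 0 := ne_of_gt hlam
    linear_combination (-((1 - s σ ^ 2) * u σ ^ 2 * Real.cos (lam * s σ) + v σ * Real.sin (lam * s σ) * (1 - s σ ^ 2) * u σ)) * (mul_one_div_cancel hlam')
  -- It suffices to show F is constant on Icc between any two points of I
  have key : ∀ a ∈ I, ∀ b ∈ I, a ≤ b → F b = F a := by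
    intro a ha b hb hab
    have hsub : Set.Icc a b ⊆ I := hI.out ha hb
    have hcont : ContinuousOn F (Set.Icc a b) := fun x hx =>
      (hderiv x (hsub hx)).continuousAt.continuousWithinAt
    have hd : ∀ x ∈ Set.Ico a b, HasDerivWithinAt F 0 (Set.Ici x) x := fun x hx =>
      (hderiv x (hsub ⟨hx.1, le_of_lt hx.2⟩)).hasDerivWithinAt
    exact constant_of_has_deriv_right_zero hcont hd b ⟨hab, le_refl b⟩
  intro σ₁ h₁ σ₂ h₂
  rcases le_total σ₁ σ₂ with h | h
  · exact (key σ₁ h₁ σ₂ h₂ h).symm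
  · exact key σ₂ h₂ σ₁ h₁ h
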